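/- Let 0 < μ < L, Q = L/μ > 1, α = 1/L, β = (√Q − 1)/(√Q + 1), and r = (√Q − 1)/√Q. Then for every integer k ≥ 1, the spectral radius of the 2×2 matrix B(L) B(μ)^k satisfies ρ(B(L) B(μ)^k) = r^{k+1} · k, where B(L) = [[0, β²], [−1, β]] and B(μ) = [[1 − α(1+β)μ, β²], [−αμ, β]]. In particular, if r^{k+1} k > 1 then this product has spectral radius exceeding 1. -/

import Mathlib

open Matrix

/-- The 2×2 matrix `B(λ)` from the analysis of Nesterov's method; with `α = 1/L` the
matrix `B(L)` has top-left entry `1 − α(1+β)L = −β`. -/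
noncomputable def Bmat (α β lam : ℝ) : Matrix (Fin 2) (Fin 2) ℝ :=
  !![1 - α * (1 + β) * lam, β ^ 2; -(α * lam), β]

/-- The spectral radius of a real square matrix: the maximum modulus of its complex
eigenvalues. -/
noncomputable def specRad {m : Type*} [Fintype m] [DecidableEq m]
    (A : Matrix m m ℝ) : ℝ :=
  sSup ((fun z : ℂ => ‖z‖) '' spectrum ℂ (A.map (algebraMap ℝ ℂ)))

lemma spec_fin_two_det_zero (A : Matrix (Fin 2) (Fin 2) ℂ)
    (h : A 0 0 * A 1 1 - A 0 1 * A 1 0 = 0) :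
    spectrum ℂ A = {0, A 0 0 + A 1 1} := by
  ext z
  rw [spectrum.mem_iff, Matrix.isUnit_iff_isUnit_det, isUnit_iff_ne_zero, not_not]
  have hdet : (algebraMap ℂ (Matrix (Fin 2) (Fin 2) ℂ) z - A).det
      = z * (z - (A 0 0 + A 1 1)) := by
    rw [Matrix.det_fin_two]
    simp [Matrix.algebraMap_matrix_apply, Matrix.sub_apply]
    linear_combination h
  rw [hdet, mul_eq_zero, sub_eq_zero]
  simp [Set.mem_insert_iff]

lemma specRad_fin_two_det_zero (M : Matrix (Fin 2) (Fin 2) ℝ) (h : M.det = 0) :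
    specRad M = |M 0 0 + M 1 1| := by
  have hmap : ∀ i j, (M.map (algebraMap ℝ ℂ)) i j = ((M i j : ℝ) : ℂ) := by
    intro i j; simp [Matrix.map_apply]
  have hd : (M.map (algebraMap ℝ ℂ)) 0 0 * (M.map (algebraMap ℝ ℂ)) 1 1
      - (M.map (algebraMap ℝ ℂ)) 0 1 * (M.map (algebraMap ℝ ℂ)) 1 0 = 0 := by
    rw [Matrix.det_fin_two] at h
    rw [hmap, hmap, hmap, hmap]
    exact_mod_cast congrArg (fun x : ℝ => (x : ℂ)) h
  unfold specRad
  rw [spec_fin_two_det_zero _ hd, Set.image_pair, csSup_pair]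
  rw [hmap, hmap]
  rw [← Complex.ofReal_add, Complex.norm_real]
  simp

/-- With `α = 1/L`, `β = (√Q−1)/(√Q+1)`, `r = (√Q−1)/√Q`, for every
integer `k ≥ 1` the spectral radius of `B(L) B(μ)^k` equals `r^{k+1} · k`; in
particular if `r^{k+1} k > 1` then this product has spectral radius exceeding `1`. -/
theorem stmt19 (μ L : ℝ) (hμ : 0 < μ) (hμL : μ < L)
    (Q : ℝ) (hQ : Q = L / μ) (hQ1 : 1 < Q)
    (α β r : ℝ) (hα : α = 1 / L) (hβ : β = (Real.sqrt Q - 1) / (Real.sqrt Q + 1))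
    (hr : r = (Real.sqrt Q - 1) / Real.sqrt Q) :
    ∀ k : ℕ, 1 ≤ k →
      specRad (Bmat α β L * (Bmat α β μ) ^ k) = r ^ (k + 1) * (k : ℝ) ∧
      (1 < r ^ (k + 1) * (k : ℝ) →
        1 < specRad (Bmat α β L * (Bmat α β μ) ^ k)) := by
  intro k hk
  obtain ⟨m, rfl⟩ : ∃ m, k = m + 1 := ⟨k - 1, (Nat.succ_pred_eq_of_pos hk).symm⟩
  have hL : (0:ℝ) < L := lt_trans hμ hμL
  have hLne : L ≠ 0 := ne_of_gt hL
  have hμne : μ ≠ 0 := ne_of_gt hμ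
  set q := Real.sqrt Q with hqdef
  have hq1 : 1 < q := by
    rw [hqdef, show (1:ℝ) = Real.sqrt 1 by simp]
    exact Real.sqrt_lt_sqrt (by norm_num) hQ1
  have hq0 : (0:ℝ) < q := lt_trans one_pos hq1
  have hqne : q ≠ 0 := ne_of_gt hq0
  have hq1ne : q + 1 ≠ 0 := by positivity
  have hQq : Q = q * q := (Real.mul_self_sqrt (le_of_lt (lt_trans one_pos hQ1))).symm
  have hμQ : μ * Q = L := by rw [hQ]; field_simp
  have hαL : α * L = 1 := by rw [hα]; field_simp
  have hαμ : α * μ = 1 / (q * q) := by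
    rw [hα, ← hQq, ← hμQ]; field_simp [hμne]
  -- nilpotent part of B(μ)
  set n : ℝ := (q - 1) / (q * (q + 1)) with hn
  set N : Matrix (Fin 2) (Fin 2) ℝ := !![n, β ^ 2; -(1 / (q * q)), -n] with hNdef
  set BL : Matrix (Fin 2) (Fin 2) ℝ := !![-β, β ^ 2; -1, β] with hBLdef
  have hBL : Bmat α β L = BL := by
    have h1 : 1 - α * (1 + β) * L = -β := by
      rw [hα]; field_simp; ring
    have h2 : α * L = 1 := hαL
    unfold Bmat
    rw [hBLdef, h1, h2]
  have hBμ : Bmat α β μ = r • (1 : Matrix (Fin 2) (Fin 2) ℝ) + N := by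
    have hc : α * (1 + β) * μ = (1 + β) / (q * q) := by
      rw [mul_comm α (1 + β), mul_assoc, hαμ]; ring
    unfold Bmat
    ext i j
    fin_cases i <;> fin_cases j <;>
      simp [hNdef, Matrix.one_apply, hc, hαμ] <;>
      rw [hβ, hr, hn] <;> field_simp <;> ring_nf
  have hN2 : N * N = 0 := by
    ext i j
    fin_cases i <;> fin_cases j <;>
      simp [hNdef, Matrix.mul_apply, Fin.sum_univ_two] <;>
      (try rw [hβ, hn]) <;> (try field_simp) <;> ring
  have hpow : ∀ p : ℕ, (r • (1 : Matrix (Fin 2) (Fin 2) ℝ) + N) ^ (p + 1)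
      = r ^ (p + 1) • (1 : Matrix (Fin 2) (Fin 2) ℝ) + (((p : ℝ) + 1) * r ^ p) • N := by
    intro p
    induction p with
    | zero => simp
    | succ p ih =>
      rw [pow_succ, ih]
      simp only [mul_add, add_mul, smul_mul_assoc, mul_smul_comm, smul_smul,
        one_mul, mul_one, hN2, smul_zero, add_zero]
      push_cast
      match_scalars <;> ring
  have hMeq : Bmat α β L * (Bmat α β μ) ^ (m + 1)
      = r ^ (m + 1) • BL + (((m : ℝ) + 1) * r ^ m) • (BL * N) := by
    rw [hBL, hBμ, hpow m, mul_add, mul_smul_comm, mul_one, mul_smul_comm]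
  have hdet : (Bmat α β L * (Bmat α β μ) ^ (m + 1)).det = 0 := by
    have hBLdet : BL.det = 0 := by
      rw [hBLdef, Matrix.det_fin_two_of]; ring
    rw [Matrix.det_mul, hBL, hBLdet, zero_mul]
  have hr0 : (0:ℝ) < r := by
    rw [hr]; exact div_pos (by linarith) hq0
  have htr : (Bmat α β L * (Bmat α β μ) ^ (m + 1)) 0 0
      + (Bmat α β L * (Bmat α β μ) ^ (m + 1)) 1 1
      = -(((m : ℝ) + 1) * r ^ (m + 2)) := by
    rw [hMeq]
    simp [hBLdef, hNdef, Matrix.mul_apply, Fin.sum_univ_two, Matrix.add_apply]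
    rw [hβ, hn, show r ^ (m + 2) = r ^ m * r ^ 2 by ring, show r ^ (m + 1) = r ^ m * r by ring]
    generalize r ^ m = t
    rw [hr]
    field_simp
    ring
  have heq : specRad (Bmat α β L * (Bmat α β μ) ^ (m + 1))
      = r ^ (m + 1 + 1) * ((m + 1 : ℕ) : ℝ) := by
    rw [specRad_fin_two_det_zero _ hdet, htr, abs_neg,
      abs_of_nonneg (by positivity)]
    push_cast
    ring
  exact ⟨heq, fun h => by rw [heq]; exact h⟩
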